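/- Let H ∈ ℂ^{m×m} be invertible, η ∈ ℂ, and define y^fom = H^{-1} β e_1 and y^gmres as the minimizer of ‖β e_1 − H̄ y‖₂ where H̄ = [H; η e_m^*] ∈ ℂ^{(m+1)×m}. Then y^gmres = y^fom − H^{-1} (η̄ H^{-*} e_m) · (η e_m^* y^fom) / (1 + ‖η H^{-*} e_m‖₂²). -/

import Mathlib

open Matrix

noncomputable def norm2 {n : ℕ} (x : Fin n → ℂ) : ℝ :=
  ‖(WithLp.equiv 2 (Fin n → ℂ)).symm x‖

lemma norm2_eq {n : ℕ} (x : Fin n → ℂ) : norm2 x = Real.sqrt (∑ i, ‖x i‖ ^ 2) := by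
  rw [norm2, EuclideanSpace.norm_eq]
  simp [WithLp.equiv_symm_apply, PiLp.toLp_apply]

theorem stmt11 {m : ℕ} (H : Matrix (Fin (m + 1)) (Fin (m + 1)) ℂ)
    (hH : IsUnit H) (η : ℂ) (β : ℝ) (hβ : 0 < β)
    (Hb : Matrix (Fin (m + 2)) (Fin (m + 1)) ℂ)
    (hTop : Hb.submatrix Fin.castSucc id = H)
    (hBot : ∀ j, Hb (Fin.last (m + 1)) j = η * (Pi.single (Fin.last m) (1 : ℂ) : Fin (m + 1) → ℂ) j)
    (yg : Fin (m + 1) → ℂ)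
    (hyg : ∀ z : Fin (m + 1) → ℂ,
      norm2 ((β : ℂ) • (Pi.single 0 1 : Fin (m + 2) → ℂ) - Hb *ᵥ yg) ≤
        norm2 ((β : ℂ) • (Pi.single 0 1 : Fin (m + 2) → ℂ) - Hb *ᵥ z)) :
    yg = H⁻¹ *ᵥ ((β : ℂ) • (Pi.single 0 1 : Fin (m + 1) → ℂ)) -
      ((η * (H⁻¹ *ᵥ ((β : ℂ) • (Pi.single 0 1 : Fin (m + 1) → ℂ))) (Fin.last m)) /
          ((1 + (norm2 (η • ((Hᴴ)⁻¹ *ᵥ (Pi.single (Fin.last m) 1 : Fin (m + 1) → ℂ)))) ^ 2 : ℝ) : ℂ)) •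
        (H⁻¹ *ᵥ (starRingEnd ℂ η • ((Hᴴ)⁻¹ *ᵥ (Pi.single (Fin.last m) 1 : Fin (m + 1) → ℂ)))) := by
  have hdet : IsUnit H.det := (Matrix.isUnit_iff_isUnit_det H).mp hH
  have hHinv : H * H⁻¹ = 1 := Matrix.mul_nonsing_inv H hdet
  have hinvH : H⁻¹ * H = 1 := Matrix.nonsing_inv_mul H hdet
  have hdetT : IsUnit Hᴴ.det := by
    rw [Matrix.det_conjTranspose]
    exact hdet.star
  have hHTinv : Hᴴ * (Hᴴ)⁻¹ = 1 := Matrix.mul_nonsing_inv Hᴴ hdetT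
  set e1 : Fin (m + 1) → ℂ := Pi.single 0 1 with he1
  set e : Fin (m + 1) → ℂ := Pi.single (Fin.last m) 1 with he
  set w : Fin (m + 1) → ℂ := (Hᴴ)⁻¹ *ᵥ e with hw
  set u0 : Fin (m + 1) → ℂ := H⁻¹ *ᵥ ((β : ℂ) • e1) with hu0
  set v : Fin (m + 1) → ℂ := H⁻¹ *ᵥ (starRingEnd ℂ η • w) with hv
  set D : ℝ := 1 + (norm2 (η • w)) ^ 2 with hD
  set c : ℂ := (η * u0 (Fin.last m)) / (D : ℂ) with hc
  set ys : Fin (m + 1) → ℂ := u0 - c • v with hys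
  -- s = ‖w‖²
  set s : ℝ := ∑ k, Complex.normSq (w k) with hs
  clear_value e1 e w u0 v D c ys s
  have hsnn : 0 ≤ s := by
    rw [hs]; exact Finset.sum_nonneg fun k _ => Complex.normSq_nonneg _
  have hDval : (D : ℂ) = 1 + Complex.normSq η * (s : ℂ) := by
    have : (norm2 (η • w)) ^ 2 = Complex.normSq η * s := by
      rw [norm2_eq, Real.sq_sqrt (Finset.sum_nonneg fun i _ => sq_nonneg _), hs]
      rw [Finset.mul_sum]
      refine Finset.sum_congr rfl fun i _ => ?_
      simp [Pi.smul_apply, Complex.sq_norm, Complex.normSq_mul, ← Complex.sq_norm, mul_pow]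
    rw [hD, this]
    push_cast
    ring
  have hDpos : 0 < D := by rw [hD]; positivity
  have hDne : (D : ℂ) ≠ 0 := by
    exact_mod_cast Complex.ofReal_ne_zero.mpr hDpos.ne'
  -- w k = (Hᴴ)⁻¹ k (last)
  have hwk : ∀ k, w k = (Hᴴ)⁻¹ k (Fin.last m) := by
    intro k
    rw [hw, Matrix.mulVec, dotProduct]
    simp [he, Pi.single_apply]
  -- (H⁻¹ *ᵥ w) last = s
  have hinv_w_last : (H⁻¹ *ᵥ w) (Fin.last m) = (s : ℂ) := by
    rw [Matrix.mulVec, dotProduct, hs]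
    push_cast
    refine Finset.sum_congr rfl fun k _ => ?_
    have hHk : H⁻¹ (Fin.last m) k = starRingEnd ℂ (w k) := by
      rw [hwk k, ← Matrix.conjTranspose_nonsing_inv]
      simp [Matrix.conjTranspose_apply]
    rw [hHk, Complex.normSq_eq_conj_mul_self]
  have hvlast : v (Fin.last m) = starRingEnd ℂ η * (s : ℂ) := by
    rw [hv, Matrix.mulVec_smul, Pi.smul_apply, hinv_w_last, smul_eq_mul]
  -- H *ᵥ ys
  have hHu0 : H *ᵥ u0 = (β : ℂ) • e1 := by
    rw [hu0, Matrix.mulVec_mulVec, hHinv, Matrix.one_mulVec]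
  have hHv : H *ᵥ v = starRingEnd ℂ η • w := by
    rw [hv, Matrix.mulVec_mulVec, hHinv, Matrix.one_mulVec]
  have hHTw : Hᴴ *ᵥ w = e := by
    rw [hw, Matrix.mulVec_mulVec, hHTinv, Matrix.one_mulVec]
  have hHys : H *ᵥ ys = (β : ℂ) • e1 - (c * starRingEnd ℂ η) • w := by
    rw [hys, Matrix.mulVec_sub, Matrix.mulVec_smul, hHu0, hHv, smul_smul]
  -- the key scalar identity
  have hckey : c * starRingEnd ℂ η - starRingEnd ℂ η * (η * ys (Fin.last m)) = 0 := by
    have hyslast : ys (Fin.last m) = u0 (Fin.last m) - c * (starRingEnd ℂ η * (s : ℂ)) := by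
      rw [hys]; simp [hvlast]
    have hcD : c * (D : ℂ) = η * u0 (Fin.last m) := by
      rw [hc, div_mul_cancel₀ _ hDne]
    rw [hyslast]
    have hnsq : η * starRingEnd ℂ η = (Complex.normSq η : ℂ) := by
      rw [mul_comm, Complex.normSq_eq_conj_mul_self]
    rw [hDval] at hcD
    linear_combination (starRingEnd ℂ η) * hcD + c * (starRingEnd ℂ η) * (s : ℂ) * hnsq
  -- residual and structure of Hb
  set b : Fin (m + 2) → ℂ := (β : ℂ) • (Pi.single 0 1 : Fin (m + 2) → ℂ) with hb
  set r : Fin (m + 2) → ℂ := b - Hb *ᵥ ys with hr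
  clear_value b r
  have hb_cast : ∀ i : Fin (m + 1), b (Fin.castSucc i) = ((β : ℂ) • e1) i := by
    intro i
    simp [hb, he1, Pi.single_apply]
  have hb_last : b (Fin.last (m + 1)) = 0 := by
    simp [hb, Pi.single_apply, Fin.ext_iff]
  have hHb_cast : ∀ i j, Hb (Fin.castSucc i) j = H i j := by
    intro i j; rw [← hTop]; rfl
  have hmul_cast : ∀ (d : Fin (m + 1) → ℂ) i, (Hb *ᵥ d) (Fin.castSucc i) = (H *ᵥ d) i := by
    intro d i
    simp [Matrix.mulVec, dotProduct, hHb_cast]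
  have hmul_last : ∀ (d : Fin (m + 1) → ℂ),
      (Hb *ᵥ d) (Fin.last (m + 1)) = η * d (Fin.last m) := by
    intro d
    simp [Matrix.mulVec, dotProduct, hBot, he, Pi.single_apply, ite_mul, mul_assoc]
  have hconj_e : ∀ j, starRingEnd ℂ (e j) = e j := by
    intro j; rcases eq_or_ne j (Fin.last m) with h | h <;> simp [he, Pi.single_apply, h]
  -- orthogonality : Hbᴴ *ᵥ r = 0
  have horth : Hbᴴ *ᵥ r = 0 := by
    funext j
    have hres_eq : (β : ℂ) • e1 - H *ᵥ ys = (c * starRingEnd ℂ η) • w := by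
      rw [hHys, sub_sub_cancel]
    have hres_top : ∀ i, r (Fin.castSucc i) = (c * starRingEnd ℂ η) * w i := by
      intro i
      rw [hr, Pi.sub_apply, hb_cast, hmul_cast]
      have := congrFun hres_eq i
      simpa using this
    have hres_last : r (Fin.last (m + 1)) = -(η * ys (Fin.last m)) := by
      rw [hr, Pi.sub_apply, hb_last, hmul_last, zero_sub]
    have hsplit : (Hbᴴ *ᵥ r) j =
        (∑ i : Fin (m + 1), starRingEnd ℂ (Hb (Fin.castSucc i) j) * r (Fin.castSucc i)) +
          starRingEnd ℂ (Hb (Fin.last (m + 1)) j) * r (Fin.last (m + 1)) := by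
      simp [Matrix.mulVec, dotProduct, Matrix.conjTranspose_apply, Fin.sum_univ_castSucc]
    have h1 : e j = ∑ i, starRingEnd ℂ (H i j) * w i := by
      have : (Hᴴ *ᵥ w) j = ∑ i, starRingEnd ℂ (H i j) * w i := by
        simp [Matrix.mulVec, dotProduct, Matrix.conjTranspose_apply]
      rw [hHTw] at this
      exact this
    have htopsum : ∑ i : Fin (m + 1),
        starRingEnd ℂ (Hb (Fin.castSucc i) j) * r (Fin.castSucc i) =
          (c * starRingEnd ℂ η) * e j := by
      rw [h1, Finset.mul_sum]
      refine Finset.sum_congr rfl fun i _ => ?_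
      rw [hHb_cast, hres_top]
      ring
    rw [hsplit, htopsum, hres_last, hBot j, _root_.map_mul, hconj_e, Pi.zero_apply]
    linear_combination (e j) * hckey
  have hortho_dot : ∀ d : Fin (m + 1) → ℂ, star (Hb *ᵥ d) ⬝ᵥ r = 0 := by
    intro d
    rw [Matrix.star_mulVec, ← Matrix.dotProduct_mulVec, horth, dotProduct_zero]
  -- Pythagoras argument
  set d : Fin (m + 1) → ℂ := yg - ys with hd
  set t : Fin (m + 2) → ℂ := Hb *ᵥ d with ht
  clear_value d t
  have hrc : b - Hb *ᵥ yg = r - t := by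
    have hts : Hb *ᵥ d = Hb *ᵥ yg - Hb *ᵥ ys := by rw [hd, Matrix.mulVec_sub]
    rw [hr, ht, hts]
    abel
  have hcross' : star r ⬝ᵥ t = 0 := by
    have h0 : star t ⬝ᵥ r = 0 := by rw [ht]; exact hortho_dot d
    rw [Matrix.star_dotProduct] at h0
    exact star_eq_zero.mp h0
  have hT0 : t = 0 := by
    set R : EuclideanSpace ℂ (Fin (m + 2)) := (WithLp.equiv 2 _).symm r with hR
    set T : EuclideanSpace ℂ (Fin (m + 2)) := (WithLp.equiv 2 _).symm t with hT
    clear_value R T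
    have hip : (inner ℂ R T : ℂ) = 0 := by
      rw [hR, hT]
      simpa [PiLp.inner_apply, RCLike.inner_apply, dotProduct, Pi.star_apply,
        WithLp.equiv_symm_apply, PiLp.toLp_apply, mul_comm] using hcross'
    have hle : ‖R - T‖ ≤ ‖R‖ := by
      have h := hyg ys
      rw [← hr] at h
      rw [hrc] at h
      rw [norm2, norm2, show (WithLp.equiv 2 (Fin (m + 2) → ℂ)).symm (r - t) = R - T from by rw [hR, hT]; rfl, ← hR] at h
      exact h
    have hsq : ‖R - T‖ ^ 2 = ‖R‖ ^ 2 + ‖T‖ ^ 2 := by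
      rw [norm_sub_sq (𝕜 := ℂ), hip]
      simp
    have hTnorm : ‖T‖ = 0 := by
      nlinarith [norm_nonneg T, norm_nonneg R, norm_nonneg (R - T)]
    have : T = 0 := norm_eq_zero.mp hTnorm
    funext i
    have := congrFun (congrArg (WithLp.equiv 2 (Fin (m + 2) → ℂ)) this) i
    simpa [hT] using this
  have hHd : H *ᵥ d = 0 := by
    funext i
    have h0 : (Hb *ᵥ d) (Fin.castSucc i) = 0 := by
      rw [← ht, hT0]; rfl
    rw [← hmul_cast d i, h0]; rfl
  have hd0 : d = 0 := by
    have h := congrArg (fun x => H⁻¹ *ᵥ x) hHd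
    simpa [Matrix.mulVec_mulVec, hinvH, Matrix.one_mulVec] using h
  have : yg = ys := by
    have := sub_eq_zero.mp (hd ▸ hd0 : yg - ys = 0)
    exact this
  exact this
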